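/- Let G be a connected bipartite graph with x row vertices and y column vertices, and let D ≥ 0 be an integer with x + y = D + 2. Suppose there exist a prime power q and an x×y matrix A over F_q of rank D such that the bipartite graph on [x] ⊔ [y] with an edge between row vertex i and column vertex j whenever A_{i,j} ≠ 0 is isomorphic to G by an isomorphism sending row vertices to row vertices and column vertices to column vertices. Then (G, D) is one of the following: G is the path with 2 row vertices and 2 column vertices (edge set of the form {(r,b),(r,c),(s,c)} with r ≠ s, b ≠ c) and D = 2; G is the complete bipartite graph K_{2,2} on 2 row vertices and 2 column vertices and D = 2; G is the path with 1 row vertex joined to 2 column vertices and D = 1; G is the path with 2 row vertices joined to 1 column vertex and D = 1. -/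
import Mathlib


/-- The bi-colored graph of a bipartite edge set `E ⊆ [x] × [y]`:
vertices `[x] ⊔ [y]`, edges between row vertex `i` and column vertex `j` with `(i,j) ∈ E`. -/
def bgOf {x y : ℕ} (E : Finset (Fin x × Fin y)) : SimpleGraph (Fin x ⊕ Fin y) :=
  SimpleGraph.fromRel (fun u v => ∃ i j, (i, j) ∈ E ∧ u = Sum.inl i ∧ v = Sum.inr j)

private lemma matrix_entry_zero_of_rank_zero {m n : Type*} [Fintype m] [Fintype n]
    [DecidableEq n] {K : Type*} [Field K]
    (A : Matrix m n K) (hA : A.rank = 0) (i : m) (j : n) : A i j = 0 := by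
  rw [Matrix.rank, Submodule.finrank_eq_zero, LinearMap.range_eq_bot] at hA
  have h2 : A.mulVec (Pi.single j 1) i = 0 := by
    have := congrFun (congrFun (congrArg DFunLike.coe hA) (Pi.single j 1)) i
    simpa [Matrix.mulVecLin] using this
  rw [Matrix.mulVec_single] at h2
  simpa using h2

private lemma reachable_invariant {V : Type*} {G : SimpleGraph V} (f : V → Bool)
    (hf : ∀ u v, G.Adj u v → f u = f v) {u v : V} (h : G.Reachable u v) : f u = f v := by
  obtain ⟨w⟩ := h
  induction w with
  | nil => rfl
  | cons h p ih => exact (hf _ _ h).trans ih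

private lemma exists_adj_of_reachable {V : Type*} {G : SimpleGraph V} {u v : V}
    (h : G.Reachable u v) (hne : u ≠ v) : ∃ w, G.Adj u w := by
  obtain ⟨w⟩ := h
  cases w with
  | nil => exact absurd rfl hne
  | cons h p => exact ⟨_, h⟩

private lemma row_covered {x y : ℕ} {E : Finset (Fin x × Fin y)}
    (hconn : (bgOf E).Connected) (i : Fin x) (j0 : Fin y) : ∃ j, (i, j) ∈ E := by
  have hr := hconn.preconnected (Sum.inl i) (Sum.inr j0)
  obtain ⟨w, hadj⟩ := exists_adj_of_reachable hr (by simp)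
  simp only [bgOf, SimpleGraph.fromRel_adj] at hadj
  obtain ⟨-, h | h⟩ := hadj
  · obtain ⟨i', j, hj, hi, hw⟩ := h
    cases hi
    exact ⟨j, hj⟩
  · obtain ⟨i', j, hj, hi, hw⟩ := h
    exact absurd hw (by simp)

private lemma col_covered {x y : ℕ} {E : Finset (Fin x × Fin y)}
    (hconn : (bgOf E).Connected) (i0 : Fin x) (j : Fin y) : ∃ i, (i, j) ∈ E := by
  have hr := hconn.preconnected (Sum.inr j) (Sum.inl i0)
  obtain ⟨w, hadj⟩ := exists_adj_of_reachable hr (by simp)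
  simp only [bgOf, SimpleGraph.fromRel_adj] at hadj
  obtain ⟨-, h | h⟩ := hadj
  · obtain ⟨i, j', hj, hi, hw⟩ := h
    exact absurd hi (by simp)
  · obtain ⟨i, j', hj, hi, hw⟩ := h
    obtain rfl : j = j' := by simpa using hw
    exact ⟨i, hj⟩


/-- Classification of connected bi-colored graphs `G` (given by the edge set `E`) with
`x` row vertices, `y` column vertices, realizable as the support graph of a rank `D` matrix
over a finite field, with `x + y = D + 2`:
it is the Z graph with `D = 2`, the shoelace graph `K_{2,2}` with `D = 2`,
or one of the two wedge graphs with `D = 1`. -/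
theorem graph_rank_classification {x y : ℕ} (E : Finset (Fin x × Fin y)) (D : ℕ)
    (hconn : (bgOf E).Connected) (hxy : x + y = D + 2)
    (F : Type) [Field F] [Fintype F]
    (h : ∃ (A : Matrix (Fin x) (Fin y) F) (σ : Equiv.Perm (Fin x)) (τ : Equiv.Perm (Fin y)),
      A.rank = D ∧ ∀ i j, A (σ i) (τ j) ≠ 0 ↔ (i, j) ∈ E) :
    (x = 2 ∧ y = 2 ∧ D = 2 ∧
      ∃ (a d : Fin x) (b c : Fin y), a ≠ d ∧ b ≠ c ∧ E = {(a, b), (a, c), (d, c)}) ∨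
    (x = 2 ∧ y = 2 ∧ D = 2 ∧ E = Finset.univ) ∨
    (x = 1 ∧ y = 2 ∧ D = 1 ∧
      ∃ (a : Fin x) (b c : Fin y), b ≠ c ∧ E = {(a, b), (a, c)}) ∨
    (x = 2 ∧ y = 1 ∧ D = 1 ∧
      ∃ (a d : Fin x) (c : Fin y), a ≠ d ∧ E = {(a, c), (d, c)}) := by
  obtain ⟨A, σ, τ, hrk, hsupp⟩ := h
  have hDx : D ≤ x := by
    have := A.rank_le_card_height
    simpa [hrk] using this
  have hDy : D ≤ y := by
    have := A.rank_le_card_width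
    simpa [hrk] using this
  have hx2 : x ≤ 2 := by omega
  have hy2 : y ≤ 2 := by omega
  interval_cases x <;> interval_cases y
  -- x = 0, y = 0
  · omega
  -- x = 0, y = 1
  · omega
  -- x = 0, y = 2
  · exfalso
    have hr := hconn.preconnected (Sum.inr 0) (Sum.inr 1)
    obtain ⟨w, hadj⟩ := exists_adj_of_reachable hr (by simp)
    simp only [bgOf, SimpleGraph.fromRel_adj] at hadj
    obtain ⟨-, ⟨i, _, _⟩ | ⟨i, _, _⟩⟩ := hadj <;> exact i.elim0
  -- x = 1, y = 0
  · omega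
  -- x = 1, y = 1
  · exfalso
    have hD : D = 0 := by omega
    have hr := hconn.preconnected (Sum.inl 0) (Sum.inr 0)
    obtain ⟨w, hadj⟩ := exists_adj_of_reachable hr (by simp)
    simp only [bgOf, SimpleGraph.fromRel_adj] at hadj
    have hmem : ∃ i j, (i, j) ∈ E := by
      obtain ⟨-, ⟨i, j, hj, -, -⟩ | ⟨i, j, hj, -, -⟩⟩ := hadj <;> exact ⟨i, j, hj⟩
    obtain ⟨i, j, hij⟩ := hmem
    have := (hsupp i j).mpr hij
    exact this (matrix_entry_zero_of_rank_zero A (by rw [hrk, hD]) _ _)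
  -- x = 1, y = 2
  · have hD : D = 1 := by omega
    obtain ⟨i0, h0⟩ := col_covered hconn 0 0
    obtain ⟨i1, h1⟩ := col_covered hconn 0 1
    obtain rfl : i0 = (0 : Fin 1) := Subsingleton.elim _ _
    obtain rfl : i1 = (0 : Fin 1) := Subsingleton.elim _ _
    refine Or.inr (Or.inr (Or.inl ⟨rfl, rfl, hD, 0, 0, 1, by decide, ?_⟩))
    ext ⟨i, j⟩
    fin_cases i <;> fin_cases j <;> simp_all <;> decide
  -- x = 2, y = 0
  · exfalso
    have hr := hconn.preconnected (Sum.inl 0) (Sum.inl 1)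
    obtain ⟨w, hadj⟩ := exists_adj_of_reachable hr (by simp)
    simp only [bgOf, SimpleGraph.fromRel_adj] at hadj
    obtain ⟨-, ⟨_, j, _⟩ | ⟨_, j, _⟩⟩ := hadj <;> exact j.elim0
  -- x = 2, y = 1
  · have hD : D = 1 := by omega
    obtain ⟨j0, h0⟩ := row_covered hconn 0 0
    obtain ⟨j1, h1⟩ := row_covered hconn 1 0
    obtain rfl : j0 = (0 : Fin 1) := Subsingleton.elim _ _
    obtain rfl : j1 = (0 : Fin 1) := Subsingleton.elim _ _
    refine Or.inr (Or.inr (Or.inr ⟨rfl, rfl, hD, 0, 1, 0, by decide, ?_⟩))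
    ext ⟨i, j⟩
    fin_cases i <;> fin_cases j <;> simp_all <;> decide
  -- x = 2, y = 2
  · have hD : D = 2 := by omega
    have hr0 := row_covered hconn 0 0
    have hr1 := row_covered hconn 1 0
    have hc0 := col_covered hconn 0 0
    have hc1 := col_covered hconn 0 1
    by_cases h00 : ((0 : Fin 2), (0 : Fin 2)) ∈ E <;>
      by_cases h01 : ((0 : Fin 2), (1 : Fin 2)) ∈ E <;>
      by_cases h10 : ((1 : Fin 2), (0 : Fin 2)) ∈ E <;>
      by_cases h11 : ((1 : Fin 2), (1 : Fin 2)) ∈ E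
    -- 1111
    · refine Or.inr (Or.inl ⟨rfl, rfl, hD, ?_⟩)
      ext ⟨i, j⟩
      fin_cases i <;> fin_cases j <;> simp_all <;> decide
    -- 1110 : missing (1,1): a=0,b=1? E = {(a,b),(a,c),(d,c)} with a=0, then need (0,b),(0,c),(d,c); present: (0,0),(0,1),(1,0): a=0,b=1,c=0,d=1
    · refine Or.inl ⟨rfl, rfl, hD, 0, 1, 1, 0, by decide, by decide, ?_⟩
      ext ⟨i, j⟩
      fin_cases i <;> fin_cases j <;> simp_all <;> decide
    -- 1101 : missing (1,0): present (0,0),(0,1),(1,1): a=0,b=0,c=1,d=1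
    · refine Or.inl ⟨rfl, rfl, hD, 0, 1, 0, 1, by decide, by decide, ?_⟩
      ext ⟨i, j⟩
      fin_cases i <;> fin_cases j <;> simp_all <;> decide
    -- 1100 : row 1 uncovered
    · exfalso
      obtain ⟨j, hj⟩ := hr1
      fin_cases j <;> simp_all
    -- 1011 : missing (0,1): present (0,0),(1,0),(1,1): a=1,b=1,c=0,d=0
    · refine Or.inl ⟨rfl, rfl, hD, 1, 0, 1, 0, by decide, by decide, ?_⟩
      ext ⟨i, j⟩
      fin_cases i <;> fin_cases j <;> simp_all <;> decide
    -- 1010 : col 1 uncovered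
    · exfalso
      obtain ⟨i, hi⟩ := hc1
      fin_cases i <;> simp_all
    -- 1001 : diagonal, disconnected
    · exfalso
      have key := reachable_invariant
        (Sum.elim (fun i => decide (i = 0)) (fun j => decide (j = 0)))
        (fun u v huv => by
          simp only [bgOf, SimpleGraph.fromRel_adj] at huv
          obtain ⟨-, ⟨i, j, hj, rfl, rfl⟩ | ⟨i, j, hj, rfl, rfl⟩⟩ := huv <;>
            fin_cases i <;> fin_cases j <;> simp_all <;> decide)
        (hconn.preconnected (Sum.inl 0) (Sum.inr 1))
      simp at key
    -- 1000 : row 1 uncovered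
    · exfalso
      obtain ⟨j, hj⟩ := hr1
      fin_cases j <;> simp_all
    -- 0111 : missing (0,0): present (0,1),(1,0),(1,1): a=1,b=0,c=1,d=0
    · refine Or.inl ⟨rfl, rfl, hD, 1, 0, 0, 1, by decide, by decide, ?_⟩
      ext ⟨i, j⟩
      fin_cases i <;> fin_cases j <;> simp_all <;> decide
    -- 0110 : anti-diagonal, disconnected
    · exfalso
      have key := reachable_invariant
        (Sum.elim (fun i => decide (i = 0)) (fun j => decide (j = 1)))
        (fun u v huv => by
          simp only [bgOf, SimpleGraph.fromRel_adj] at huv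
          obtain ⟨-, ⟨i, j, hj, rfl, rfl⟩ | ⟨i, j, hj, rfl, rfl⟩⟩ := huv <;>
            fin_cases i <;> fin_cases j <;> simp_all <;> decide)
        (hconn.preconnected (Sum.inl 0) (Sum.inr 0))
      simp at key
    -- 0101 : col 0 uncovered
    · exfalso
      obtain ⟨i, hi⟩ := hc0
      fin_cases i <;> simp_all
    -- 0100 : row 1 uncovered
    · exfalso
      obtain ⟨j, hj⟩ := hr1
      fin_cases j <;> simp_all
    -- 0011 : row 0 uncovered
    · exfalso
      obtain ⟨j, hj⟩ := hr0
      fin_cases j <;> simp_all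
    -- 0010 : row 0 uncovered
    · exfalso
      obtain ⟨j, hj⟩ := hr0
      fin_cases j <;> simp_all
    -- 0001 : row 0 uncovered
    · exfalso
      obtain ⟨j, hj⟩ := hr0
      fin_cases j <;> simp_all
    -- 0000 : row 0 uncovered
    · exfalso
      obtain ⟨j, hj⟩ := hr0
      fin_cases j <;> simp_all
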